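/- Suppose (Z_i) is stationary ergodic with E[Z_1] < 0, and let X_0, X_0' be any two nonnegative random variables, with X_{n+1}=(X_n+Z_{n+1})^+ and X'_{n+1}=(X'_n+Z_{n+1})^+. Then almost surely there exists a finite random time τ such that X_n = X'_n for all n > τ; indeed both equal max{0, Z_n, Z_n+Z_{n-1}, ..., Z_n+...+Z_1} for all large n. -/

import Mathlib

open MeasureTheory Filter

section Aux

variable {α : Type*} [MeasurableSpace α]

/-- Partial Birkhoff sums. -/
noncomputable def birkS (T : α → α) (f : α → ℝ) (n : ℕ) (z : α) : ℝ :=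
  ∑ k ∈ Finset.range n, f (T^[k] z)

lemma birkS_succ' (T : α → α) (f : α → ℝ) (n : ℕ) (z : α) :
    birkS T f (n + 1) z = f z + birkS T f n (T z) := by
  simp only [birkS, Finset.sum_range_succ']
  simp [Function.iterate_succ_apply, add_comm]

/-- Running maximum (with `0` included) of Birkhoff sums. -/
noncomputable def birkM (T : α → α) (f : α → ℝ) (n : ℕ) (z : α) : ℝ :=
  (Finset.range (n + 1)).sup' Finset.nonempty_range_add_one (fun k => birkS T f k z)

lemma birkM_nonneg (T : α → α) (f : α → ℝ) (n : ℕ) (z : α) : 0 ≤ birkM T f n z := by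
  have h0 : birkS T f 0 z = 0 := by simp [birkS]
  have := Finset.le_sup' (fun k => birkS T f k z)
    (Finset.mem_range.2 (Nat.succ_pos n) : 0 ∈ Finset.range (n + 1))
  rw [h0] at this
  exact this

lemma birkS_le_birkM (T : α → α) (f : α → ℝ) {k n : ℕ} (hk : k ≤ n) (z : α) :
    birkS T f k z ≤ birkM T f n z :=
  Finset.le_sup' (fun k => birkS T f k z) (Finset.mem_range.2 (Nat.lt_succ_of_le hk))

lemma birkM_key (T : α → α) (f : α → ℝ) (n : ℕ) (z : α) :
    birkM T f n z ≤ max (f z + birkM T f n (T z)) 0 := by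
  apply Finset.sup'_le
  intro k hk
  rcases Nat.eq_zero_or_pos k with rfl | hkpos
  · simp [birkS]
  · obtain ⟨k', rfl⟩ := Nat.exists_eq_succ_of_ne_zero hkpos.ne'
    rw [birkS_succ']
    have hk' : k' ≤ n := by
      have := Finset.mem_range.1 hk; omega
    exact le_max_of_le_left (by linarith [birkS_le_birkM T f hk' (T z)])

lemma birkS_measurable {T : α → α} {f : α → ℝ} (hT : Measurable T) (hf : Measurable f)
    (n : ℕ) : Measurable (birkS T f n) :=
  Finset.measurable_sum _ (fun k _ => hf.comp (hT.iterate k))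

lemma birkM_succ (T : α → α) (f : α → ℝ) (n : ℕ) (z : α) :
    birkM T f (n + 1) z = max (birkS T f (n + 1) z) (birkM T f n z) := by
  apply le_antisymm
  · apply Finset.sup'_le
    intro k hk
    have hk' : k ≤ n + 1 := by have := Finset.mem_range.1 hk; omega
    rcases eq_or_lt_of_le hk' with rfl | hlt
    · exact le_max_left _ _
    · exact le_max_of_le_right (birkS_le_birkM T f (by omega) z)
  · exact max_le (birkS_le_birkM T f le_rfl z)
      (Finset.sup'_le _ _ fun k hk => birkS_le_birkM T f
        (by have := Finset.mem_range.1 hk; omega) z)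

lemma birkM_zero (T : α → α) (f : α → ℝ) (z : α) : birkM T f 0 z = 0 := by
  simp [birkM, birkS]

lemma birkM_measurable {T : α → α} {f : α → ℝ} (hT : Measurable T) (hf : Measurable f)
    (n : ℕ) : Measurable (birkM T f n) := by
  induction n with
  | zero =>
    have : birkM T f 0 = fun _ => (0:ℝ) := funext fun z => birkM_zero T f z
    rw [this]; exact measurable_const
  | succ n ih =>
    have : birkM T f (n + 1) = fun z => max (birkS T f (n + 1) z) (birkM T f n z) :=
      funext fun z => birkM_succ T f n z
    rw [this]
    exact (birkS_measurable hT hf (n + 1)).max ih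

lemma birkS_integrable {μ : Measure α} {T : α → α} {f : α → ℝ}
    (hT : MeasurePreserving T μ μ) (hf : Measurable f) (hfi : Integrable f μ) (n : ℕ) :
    Integrable (birkS T f n) μ := by
  have : ∀ k : ℕ, Integrable (fun z => f (T^[k] z)) μ := fun k =>
    ((hT.iterate k).integrable_comp hfi.aestronglyMeasurable).2 hfi
  exact integrable_finset_sum _ (fun k _ => this k)

lemma birkM_integrable {μ : Measure α} {T : α → α} {f : α → ℝ}
    (hT : MeasurePreserving T μ μ) (hf : Measurable f) (hfi : Integrable f μ) (n : ℕ) :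
    Integrable (birkM T f n) μ := by
  induction n with
  | zero =>
    have : birkM T f 0 = fun _ => (0:ℝ) := funext fun z => birkM_zero T f z
    rw [this]; exact integrable_zero _ _ μ
  | succ n ih =>
    have : birkM T f (n + 1) = fun z => max (birkS T f (n + 1) z) (birkM T f n z) :=
      funext fun z => birkM_succ T f n z
    rw [this]
    exact (birkS_integrable hT hf hfi (n + 1)).sup ih

/-- The a.s. boundedness of Birkhoff sums of a negative-mean function
(consequence of the maximal ergodic theorem). -/
lemma birk_sup_finite {μ : Measure α} [IsProbabilityMeasure μ] {T : α → α}
    (herg : Ergodic T μ) {f : α → ℝ} (hf : Measurable f) (hfi : Integrable f μ)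
    (hneg : (∫ z, f z ∂μ) < 0) :
    ∀ᵐ z ∂μ, ∃ C : ℝ, ∀ n, birkS T f n z ≤ C := by
  have hT := herg.toMeasurePreserving
  -- the maximal inequality: `0 ≤ ∫ indicator {0 < birkM n} f` for every `n`
  have hmax : ∀ n : ℕ, 0 ≤ ∫ z, Set.indicator {z | 0 < birkM T f n z} f z ∂μ := by
    intro n
    have hMset : MeasurableSet {z | 0 < birkM T f n z} :=
      measurableSet_lt measurable_const (birkM_measurable hT.measurable hf n)
    have hMi := birkM_integrable hT hf hfi n
    have hMci : Integrable (fun z => birkM T f n (T z)) μ :=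
      (hT.integrable_comp hMi.aestronglyMeasurable).2 hMi
    have hpt : ∀ z, birkM T f n z - birkM T f n (T z) ≤
        Set.indicator {z | 0 < birkM T f n z} f z := by
      intro z
      by_cases hz : z ∈ {z | 0 < birkM T f n z}
      · rw [Set.indicator_of_mem hz]
        have hz' : 0 < birkM T f n z := hz
        have := birkM_key T f n z
        rcases le_max_iff.1 this with h | h
        · linarith
        · linarith
      · rw [Set.indicator_of_notMem hz]
        have hz' : ¬ 0 < birkM T f n z := hz
        have h1 : birkM T f n z = 0 :=
          le_antisymm (not_lt.1 hz') (birkM_nonneg T f n z)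
        have := birkM_nonneg T f n (T z)
        linarith
    have hint : ∫ z, (birkM T f n z - birkM T f n (T z)) ∂μ = 0 := by
      rw [integral_sub hMi hMci]
      have h2 : ∫ y, birkM T f n y ∂(Measure.map T μ) = ∫ z, birkM T f n (T z) ∂μ :=
        integral_map hT.measurable.aemeasurable
          (hT.map_eq.symm ▸ hMi.aestronglyMeasurable)
      rw [hT.map_eq] at h2
      rw [← h2, sub_self]
    calc (0:ℝ) = ∫ z, (birkM T f n z - birkM T f n (T z)) ∂μ := hint.symm
      _ ≤ ∫ z, Set.indicator {z | 0 < birkM T f n z} f z ∂μ :=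
        integral_mono (hMi.sub hMci) (hfi.indicator hMset) hpt
  -- the "unbounded sums" event
  set B : Set α := {z | ∀ N : ℕ, ∃ n, (N : ℝ) < birkS T f n z} with hBdef
  have hBmeas : MeasurableSet B := by
    have : B = ⋂ N : ℕ, ⋃ n : ℕ, {z | (N : ℝ) < birkS T f n z} := by
      ext z; simp [hBdef]
    rw [this]
    exact MeasurableSet.iInter fun N => MeasurableSet.iUnion fun n =>
      measurableSet_lt measurable_const (birkS_measurable hT.measurable hf n)
  have hBinv : T ⁻¹' B = B := by
    ext z
    simp only [Set.mem_preimage, hBdef, Set.mem_setOf_eq]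
    constructor
    · intro h N
      obtain ⟨n, hn⟩ := h (⌈(N : ℝ) - f z⌉₊)
      refine ⟨n + 1, ?_⟩
      rw [birkS_succ']
      have := Nat.le_ceil ((N : ℝ) - f z)
      linarith
    · intro h N
      obtain ⟨n, hn⟩ := h (⌈(N : ℝ) + f z⌉₊)
      have hceil : (N : ℝ) + f z ≤ (⌈(N : ℝ) + f z⌉₊ : ℝ) := by
        rcases le_or_gt ((N : ℝ) + f z) 0 with h0 | h0
        · exact h0.trans (Nat.cast_nonneg _)
        · exact Nat.le_ceil _
      have hnpos : n ≠ 0 := by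
        intro h0
        rw [h0] at hn
        simp only [birkS, Finset.range_zero, Finset.sum_empty] at hn
        have : (0:ℝ) ≤ (⌈(N : ℝ) + f z⌉₊ : ℝ) := Nat.cast_nonneg _
        linarith
      obtain ⟨m, rfl⟩ := Nat.exists_eq_succ_of_ne_zero hnpos
      rw [birkS_succ'] at hn
      exact ⟨m, by linarith⟩
  rcases herg.ae_empty_or_univ hBmeas hBinv with hB | hB
  · -- B is null: a.e. sums are bounded
    have : ∀ᵐ z ∂μ, z ∉ B := by
      have h0 : μ B = 0 := by simpa using measure_congr hB
      exact measure_eq_zero_iff_ae_notMem.1 h0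
    filter_upwards [this] with z hz
    simp only [hBdef, Set.mem_setOf_eq, not_forall, not_exists, not_lt] at hz
    obtain ⟨N, hN⟩ := hz
    exact ⟨N, hN⟩
  · -- B is conull: contradiction with negative mean
    exfalso
    have hae : ∀ᵐ z ∂μ, z ∈ B := by
      have huniv : μ B = 1 := by
        have := measure_congr hB
        simpa [measure_univ] using this
      have hc : μ Bᶜ = 0 := by
        rw [measure_compl hBmeas (measure_ne_top μ B), huniv, measure_univ, tsub_self]
      have := measure_eq_zero_iff_ae_notMem.1 hc
      filter_upwards [this] with z hz
      simpa using hz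
    have hconv : Tendsto (fun n => ∫ z, Set.indicator {z | 0 < birkM T f n z} f z ∂μ)
        atTop (nhds (∫ z, f z ∂μ)) := by
      apply tendsto_integral_of_dominated_convergence (fun z => |f z|)
      · intro n
        exact ((hf.indicator (measurableSet_lt measurable_const
          (birkM_measurable hT.measurable hf n))).aestronglyMeasurable)
      · exact hfi.abs
      · intro n
        filter_upwards with z
        calc ‖Set.indicator {z | 0 < birkM T f n z} f z‖
            ≤ ‖f z‖ := norm_indicator_le_norm_self f z
          _ = |f z| := Real.norm_eq_abs _
      · filter_upwards [hae] with z hz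
        obtain ⟨n0, hn0⟩ := hz 0
        rw [Nat.cast_zero] at hn0
        apply Tendsto.congr' _ tendsto_const_nhds
        filter_upwards [eventually_ge_atTop n0] with n hn
        have hmem : z ∈ {z | 0 < birkM T f n z} :=
          lt_of_lt_of_le hn0 (birkS_le_birkM T f hn z)
        exact (Set.indicator_of_mem hmem f).symm
    have := ge_of_tendsto hconv (Eventually.of_forall hmax)
    linarith

end Aux

/-- The candidate stationary value: running maximum of backwards partial sums. -/
noncomputable def nsup (z : ℤ → ℝ) (n : ℕ) : ℝ :=
  (Finset.range (n + 1)).sup' Finset.nonempty_range_add_one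
    (fun m => ∑ j ∈ Finset.range m, z ((n : ℤ) - j))

lemma nsup_nonneg (z : ℤ → ℝ) (n : ℕ) : 0 ≤ nsup z n := by
  have := Finset.le_sup' (fun m => ∑ j ∈ Finset.range m, z ((n : ℤ) - j))
    (Finset.mem_range.2 (Nat.succ_pos n) : 0 ∈ Finset.range (n + 1))
  simp only [Finset.range_zero, Finset.sum_empty] at this; exact this

lemma sum_shift (z : ℤ → ℝ) (n m : ℕ) :
    ∑ j ∈ Finset.range (m + 1), z ((n : ℤ) + 1 - j)
      = ∑ j ∈ Finset.range m, z ((n : ℤ) - j) + z ((n : ℤ) + 1) := by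
  rw [Finset.sum_range_succ']
  have h1 : ∀ i ∈ Finset.range m, z ((n : ℤ) + 1 - ((i + 1 : ℕ) : ℤ)) = z ((n : ℤ) - i) :=
    fun i _ => by congr 1; push_cast; ring
  rw [Finset.sum_congr rfl h1]
  norm_num

lemma nsup_succ (z : ℤ → ℝ) (n : ℕ) :
    nsup z (n + 1) = max (nsup z n + z ((n : ℤ) + 1)) 0 := by
  have hcast : ((n + 1 : ℕ) : ℤ) = (n : ℤ) + 1 := by push_cast; ring
  apply le_antisymm
  · apply Finset.sup'_le
    intro m hm
    rcases m with _ | m'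
    · simp
    · have hm' : m' ≤ n := by have := Finset.mem_range.1 hm; omega
      have hterm : ∑ j ∈ Finset.range (m' + 1), z (((n + 1 : ℕ) : ℤ) - j)
          = ∑ j ∈ Finset.range m', z ((n : ℤ) - j) + z ((n : ℤ) + 1) := by
        rw [hcast]; exact sum_shift z n m'
      rw [hterm]
      have hle : ∑ j ∈ Finset.range m', z ((n : ℤ) - j) ≤ nsup z n :=
        Finset.le_sup' (fun m => ∑ j ∈ Finset.range m, z ((n : ℤ) - j))
          (Finset.mem_range.2 (by omega : m' < n + 1))
      exact le_max_of_le_left (by linarith)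
  · apply max_le
    · have h1 : nsup z n ≤ nsup z (n + 1) - z ((n : ℤ) + 1) := by
        apply Finset.sup'_le
        intro m hm
        have hm' : m ≤ n := by have := Finset.mem_range.1 hm; omega
        have hle : ∑ j ∈ Finset.range (m + 1), z (((n + 1 : ℕ) : ℤ) - j) ≤ nsup z (n + 1) :=
          Finset.le_sup' (fun m => ∑ j ∈ Finset.range m, z (((n + 1 : ℕ) : ℤ) - j))
            (Finset.mem_range.2 (by omega : m + 1 < n + 1 + 1))
        rw [hcast, sum_shift z n m] at hle
        linarith
      linarith
    · exact nsup_nonneg z (n + 1)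

/-- Explicit solution of the Lindley recursion. -/
lemma lindley_formula (X : ℕ → (ℤ → ℝ) → ℝ) (z : ℤ → ℝ)
    (h0 : 0 ≤ X 0 z)
    (hX : ∀ n, X (n + 1) z = max (X n z + z ((n : ℤ) + 1)) 0) (n : ℕ) :
    X n z = max (nsup z n) (X 0 z + ∑ j ∈ Finset.range n, z ((n : ℤ) - j)) := by
  induction n with
  | zero =>
    have : nsup z 0 = 0 := by simp [nsup, Finset.range_one]
    simp [this, max_eq_right h0]
  | succ n ih =>
    have hcast : ((n + 1 : ℕ) : ℤ) = (n : ℤ) + 1 := by push_cast; ring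
    rw [hX n, ih, ← max_add_add_right, sup_right_comm, ← nsup_succ z n, hcast,
      sum_shift z n n, add_assoc]

lemma sum_rev (z : ℤ → ℝ) (n : ℕ) :
    ∑ j ∈ Finset.range n, z ((n : ℤ) - j) = ∑ k ∈ Finset.range n, z (1 + (k : ℤ)) := by
  rw [← Finset.sum_range_reflect (fun k => z (1 + (k : ℤ))) n]
  apply Finset.sum_congr rfl
  intro j hj
  have hj' := Finset.mem_range.1 hj
  congr 1
  omega

theorem stmt_4 (μ : Measure (ℤ → ℝ)) [IsProbabilityMeasure μ]
    (hshift : Ergodic (fun z : ℤ → ℝ => fun i => z (i + 1)) μ)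
    (hint : Integrable (fun z : ℤ → ℝ => z 1) μ)
    (hmean : (∫ z : ℤ → ℝ, z 1 ∂μ) < 0)
    (X X' : ℕ → (ℤ → ℝ) → ℝ)
    (hX0 : ∀ᵐ z ∂μ, 0 ≤ X 0 z) (hX0' : ∀ᵐ z ∂μ, 0 ≤ X' 0 z)
    (hX : ∀ n z, X (n + 1) z = max (X n z + z ((n : ℤ) + 1)) 0)
    (hX' : ∀ n z, X' (n + 1) z = max (X' n z + z ((n : ℤ) + 1)) 0) :
    ∀ᵐ z ∂μ, ∃ τ : ℕ, ∀ n, τ < n →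
      X n z = X' n z ∧
      X n z = (Finset.range (n + 1)).sup' Finset.nonempty_range_add_one
        (fun m => ∑ j ∈ Finset.range m, z ((n : ℤ) - j)) := by
  set T : (ℤ → ℝ) → (ℤ → ℝ) := fun z => fun i => z (i + 1) with hTdef
  set ε : ℝ := -(∫ z : ℤ → ℝ, z 1 ∂μ) / 2 with hεdef
  have hε : 0 < ε := by rw [hεdef]; linarith
  set f : (ℤ → ℝ) → ℝ := fun z => z 1 + ε with hfdef
  have hfm : Measurable f := by rw [hfdef]; fun_prop
  have hfi : Integrable f μ := hint.add (integrable_const ε)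
  have hfneg : (∫ z, f z ∂μ) < 0 := by
    rw [hfdef]
    rw [integral_add hint (integrable_const ε), integral_const]
    simp only [measure_univ, ENNReal.toReal_one, probReal_univ, one_smul]
    rw [hεdef]; linarith
  have key := birk_sup_finite hshift hfm hfi hfneg
  have hiter : ∀ (k : ℕ) (z : ℤ → ℝ) (i : ℤ), T^[k] z i = z (i + k) := by
    intro k
    induction k with
    | zero => intro z i; simp
    | succ k ih =>
      intro z i
      rw [Function.iterate_succ_apply]
      rw [ih (T z) i]
      show z (i + k + 1) = z (i + (k + 1 : ℕ))
      congr 1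
      push_cast; ring
  have hbirk : ∀ (n : ℕ) (z : ℤ → ℝ),
      birkS T f n z = (∑ k ∈ Finset.range n, z (1 + (k : ℤ))) + n * ε := by
    intro n z
    unfold birkS
    have : ∀ k ∈ Finset.range n, f (T^[k] z) = z (1 + (k : ℤ)) + ε := by
      intro k _
      rw [hfdef]
      simp only
      rw [hiter k z 1]
    rw [Finset.sum_congr rfl this, Finset.sum_add_distrib, Finset.sum_const,
      Finset.card_range, nsmul_eq_mul]
  filter_upwards [hX0, hX0', key] with z h0 h0' hCex
  obtain ⟨C, hC⟩ := hCex
  set M : ℝ := max (X 0 z) (X' 0 z) with hMdef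
  refine ⟨⌈(C + M) / ε⌉₊, ?_⟩
  intro n hn
  have hsum : (∑ k ∈ Finset.range n, z (1 + (k : ℤ))) + n * ε ≤ C := by
    rw [← hbirk n z]; exact hC n
  have hn' : (C + M) / ε < (n : ℝ) := by
    refine lt_of_le_of_lt (Nat.le_ceil _) ?_
    exact_mod_cast hn
  have hCM : C + M < n * ε := (div_lt_iff₀ hε).1 hn'
  have hXneg : X 0 z + ∑ j ∈ Finset.range n, z ((n : ℤ) - j) < 0 := by
    rw [sum_rev z n]
    have hXM : X 0 z ≤ M := le_max_left _ _
    linarith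
  have hXneg' : X' 0 z + ∑ j ∈ Finset.range n, z ((n : ℤ) - j) < 0 := by
    rw [sum_rev z n]
    have hXM : X' 0 z ≤ M := le_max_right _ _
    linarith
  have hXf := lindley_formula X z h0 (fun m => hX m z) n
  have hXf' := lindley_formula X' z h0' (fun m => hX' m z) n
  have hXeq : X n z = nsup z n := by
    rw [hXf]; exact max_eq_left (hXneg.le.trans (nsup_nonneg z n))
  have hXeq' : X' n z = nsup z n := by
    rw [hXf']; exact max_eq_left (hXneg'.le.trans (nsup_nonneg z n))
  exact ⟨hXeq.trans hXeq'.symm, hXeq⟩
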